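/- Write MIB(Γ, C) = (Γ^⊥, C^⊥). Then Γ is strongly C(1)-consistent if and only if C^⊥ = ∅ and every strict statement of Γ belongs to Supp(C), i.e., every strict φ ∈ Γ has some c ∈ C with c(α_φ) < c(β_φ). -/

import Mathlib

open scoped NNRat

/-- A preference statement `α < β` (strict) or `α ≤ β` (non-strict). -/
structure PrefStmt (A : Type) where
  left : A
  right : A
  strict : Bool

/-- The negation of a preference statement. -/
def negStmt {A : Type} (φ : PrefStmt A) : PrefStmt A :=
  ⟨φ.right, φ.left, !φ.strict⟩

/-- A `C(1)`-model (a list of evaluations) satisfies `α ≤ β`. -/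
def satLe {A : Type} : List (A → ℚ≥0) → A → A → Prop
  | [], _, _ => True
  | c :: H, α, β => c α < c β ∨ (c α = c β ∧ satLe H α β)

/-- A `C(1)`-model (a list of evaluations) satisfies `α < β`. -/
def satLt {A : Type} : List (A → ℚ≥0) → A → A → Prop
  | [], _, _ => False
  | c :: H, α, β => c α < c β ∨ (c α = c β ∧ satLt H α β)

/-- Satisfaction of a preference statement by a `C(1)`-model. -/
def sat {A : Type} (H : List (A → ℚ≥0)) (φ : PrefStmt A) : Prop :=
  if φ.strict then satLt H φ.left φ.right else satLe H φ.left φ.right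
/-- The evaluations in `𝒞` supporting statement `φ`. -/
def SuppSet {A : Type} (𝒞 : Finset (A → ℚ≥0)) (φ : PrefStmt A) : Set (A → ℚ≥0) :=
  {c | c ∈ 𝒞 ∧ c φ.left < c φ.right}

/-- The evaluations in `𝒞` opposing statement `φ`. -/
def OppSet {A : Type} (𝒞 : Finset (A → ℚ≥0)) (φ : PrefStmt A) : Set (A → ℚ≥0) :=
  {c | c ∈ 𝒞 ∧ c φ.right < c φ.left}

/-- `(Γ', C')` is an inconsistency base for `(Γ, 𝒞)`. -/
def InconsBase {A : Type} (𝒞 : Finset (A → ℚ≥0)) (Γ Γ' : Set (PrefStmt A))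
    (C' : Set (A → ℚ≥0)) : Prop :=
  Γ' ⊆ Γ ∧ C' ⊆ (𝒞 : Set (A → ℚ≥0)) ∧
  (∀ φ ∈ Γ', SuppSet 𝒞 φ ∪ OppSet 𝒞 φ ⊆ C') ∧
  (∀ c ∈ C', ∃ φ ∈ Γ', c ∈ OppSet 𝒞 φ)

/-- First component `Γ^⊥` of the maximal inconsistency base `MIB(Γ, 𝒞)`. -/
def MIBGamma {A : Type} (𝒞 : Finset (A → ℚ≥0)) (Γ : Set (PrefStmt A)) : Set (PrefStmt A) :=
  {φ | ∃ Γ' C', InconsBase 𝒞 Γ Γ' C' ∧ φ ∈ Γ'}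

/-- Second component `C^⊥` of the maximal inconsistency base `MIB(Γ, 𝒞)`. -/
def MIBC {A : Type} (𝒞 : Finset (A → ℚ≥0)) (Γ : Set (PrefStmt A)) : Set (A → ℚ≥0) :=
  {c | ∃ Γ' C', InconsBase 𝒞 Γ Γ' C' ∧ c ∈ C'}
/-- `H` is a `D(1)`-model: a duplicate-free list of evaluations from `D`. -/
def IsModel {A : Type} (D : Set (A → ℚ≥0)) (H : List (A → ℚ≥0)) : Prop :=
  H.Nodup ∧ ∀ c ∈ H, c ∈ D

/-- `H` is a `D(1*)`-model: a duplicate-free list whose entries are exactly `D`. -/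
def IsFullModel {A : Type} (D : Set (A → ℚ≥0)) (H : List (A → ℚ≥0)) : Prop :=
  H.Nodup ∧ ∀ c, c ∈ H ↔ c ∈ D

/-- `H` satisfies every statement in `Γ`. -/
def SatAll {A : Type} (H : List (A → ℚ≥0)) (Γ : Set (PrefStmt A)) : Prop :=
  ∀ φ ∈ Γ, sat H φ

/-- `Γ ⊨_{D(1)} φ`. -/
def Entails {A : Type} (D : Set (A → ℚ≥0)) (Γ : Set (PrefStmt A)) (φ : PrefStmt A) : Prop :=
  ∀ H, IsModel D H → SatAll H Γ → sat H φ

/-- `Γ ⊨_{D(1*)} φ`. -/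
def EntailsStar {A : Type} (D : Set (A → ℚ≥0)) (Γ : Set (PrefStmt A)) (φ : PrefStmt A) : Prop :=
  ∀ H, IsFullModel D H → SatAll H Γ → sat H φ

/-- `Γ` is strongly `D(1)`-consistent. -/
def StrongCons {A : Type} (D : Set (A → ℚ≥0)) (Γ : Set (PrefStmt A)) : Prop :=
  ∃ H, IsFullModel D H ∧ SatAll H Γ

section Aux

variable {A : Type}

theorem satLt_satLe {H : List (A → ℚ≥0)} {α β : A} (h : satLt H α β) : satLe H α β := by
  induction H with
  | nil => simp [satLt] at h
  | cons c T ih =>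
    simp only [satLt] at h
    simp only [satLe]
    rcases h with h | ⟨he, h⟩
    · exact Or.inl h
    · exact Or.inr ⟨he, ih h⟩

theorem satLt_exists {H : List (A → ℚ≥0)} {α β : A} (h : satLt H α β) :
    ∃ c ∈ H, c α < c β := by
  induction H with
  | nil => simp [satLt] at h
  | cons c T ih =>
    simp only [satLt] at h
    rcases h with h | ⟨_, h⟩
    · exact ⟨c, List.mem_cons_self, h⟩
    · obtain ⟨c', hc', h'⟩ := ih h
      exact ⟨c', List.mem_cons_of_mem _ hc', h'⟩

/-- Key lemma for (⇒): if a model (with entries in `𝒞`) satisfies (weakly) every statement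
of an inconsistency base, then no element of `C'` occurs in the model. -/
theorem no_opp (𝒞 : Finset (A → ℚ≥0)) (Γ' : Set (PrefStmt A)) (C' : Set (A → ℚ≥0))
    (hsupp : ∀ φ ∈ Γ', SuppSet 𝒞 φ ∪ OppSet 𝒞 φ ⊆ C')
    (hopp : ∀ c ∈ C', ∃ φ ∈ Γ', c ∈ OppSet 𝒞 φ) :
    ∀ H : List (A → ℚ≥0), (∀ c ∈ H, c ∈ 𝒞) →
      (∀ φ ∈ Γ', satLe H φ.left φ.right) → ∀ d ∈ C', d ∉ H := by
  intro H
  induction H with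
  | nil => simp
  | cons c T ih =>
    intro hmem hsat d hd hdH
    by_cases hc : c ∈ C'
    · obtain ⟨φ, hφ, hco⟩ := hopp c hc
      have hineq : c φ.right < c φ.left := hco.2
      have hs := hsat φ hφ
      simp only [satLe] at hs
      rcases hs with h | ⟨he, _⟩
      · exact absurd h (lt_asymm hineq)
      · exact absurd he (ne_of_gt hineq)
    · have hT : ∀ φ ∈ Γ', satLe T φ.left φ.right := by
        intro φ hφ
        have hs := hsat φ hφ
        simp only [satLe] at hs
        rcases hs with h | ⟨_, h2⟩
        · exact absurd (hsupp φ hφ (Or.inl ⟨hmem c (List.mem_cons_self), h⟩)) hc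
        · exact h2
      rcases List.mem_cons.mp hdH with rfl | hdT
      · exact hc hd
      · exact ih (fun x hx => hmem x (List.mem_cons_of_mem _ hx)) hT d hd hdT

/-- Key lemma for (⇐): greedy construction of a good ordering of any `R ⊆ 𝒞`. -/
theorem build (𝒞 : Finset (A → ℚ≥0)) (Γ : Set (PrefStmt A)) (hM : MIBC 𝒞 Γ = ∅)
    (R : Finset (A → ℚ≥0)) (hR : R ⊆ 𝒞) :
    ∃ L : List (A → ℚ≥0), L.Nodup ∧ (∀ c, c ∈ L ↔ c ∈ R) ∧
      ∀ φ ∈ Γ, SuppSet 𝒞 φ ∪ OppSet 𝒞 φ ⊆ (↑R : Set (A → ℚ≥0)) →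
        satLe L φ.left φ.right ∧ ((SuppSet 𝒞 φ).Nonempty → satLt L φ.left φ.right) := by
  classical
  induction R using Finset.strongInduction with
  | _ R IH =>
  rcases R.eq_empty_or_nonempty with rfl | hne
  · refine ⟨[], List.nodup_nil, by simp, ?_⟩
    intro φ _ hsub
    constructor
    · simp [satLe]
    · rintro ⟨c, hc⟩
      exact absurd (hsub (Or.inl hc)) (by simp)
  · -- find a safe element c₀ of R
    have hsafe : ∃ c₀ ∈ R, ∀ φ ∈ Γ,
        SuppSet 𝒞 φ ∪ OppSet 𝒞 φ ⊆ (↑R : Set (A → ℚ≥0)) → c₀ ∉ OppSet 𝒞 φ := by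
      by_contra hcon
      push_neg at hcon
      obtain ⟨c, hcR⟩ := hne
      have hcM : c ∈ MIBC 𝒞 Γ := by
        refine ⟨{φ ∈ Γ | SuppSet 𝒞 φ ∪ OppSet 𝒞 φ ⊆ (↑R : Set (A → ℚ≥0))},
          (↑R : Set (A → ℚ≥0)), ⟨fun φ hφ => hφ.1, fun x hx => hR hx, ?_, ?_⟩, hcR⟩
        · intro φ hφ
          exact hφ.2
        · intro x hx
          obtain ⟨φ, hφΓ, hsub, hopp⟩ := hcon x hx
          exact ⟨φ, ⟨hφΓ, hsub⟩, hopp⟩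
      rw [hM] at hcM
      exact hcM
    obtain ⟨c₀, hc₀R, hc₀safe⟩ := hsafe
    obtain ⟨L', hnd', hiff', hgood'⟩ := IH (R.erase c₀) (Finset.erase_ssubset hc₀R)
      (fun x hx => hR (Finset.mem_of_mem_erase hx))
    refine ⟨c₀ :: L', ?_, ?_, ?_⟩
    · refine List.nodup_cons.mpr ⟨fun h => ?_, hnd'⟩
      exact (Finset.mem_erase.mp ((hiff' c₀).mp h)).1 rfl
    · intro c
      simp only [List.mem_cons, hiff', Finset.mem_erase]
      constructor
      · rintro (rfl | ⟨_, h⟩)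
        · exact hc₀R
        · exact h
      · intro h
        by_cases hc : c = c₀
        · exact Or.inl hc
        · exact Or.inr ⟨hc, h⟩
    · intro φ hφ hsub
      by_cases hs : c₀ ∈ SuppSet 𝒞 φ
      · constructor
        · simp only [satLe]; exact Or.inl hs.2
        · intro _; simp only [satLt]; exact Or.inl hs.2
      · have hc₀𝒞 : c₀ ∈ 𝒞 := hR hc₀R
        have ho : c₀ ∉ OppSet 𝒞 φ := hc₀safe φ hφ hsub
        have hlt : ¬ c₀ φ.left < c₀ φ.right := fun h => hs ⟨hc₀𝒞, h⟩
        have hgt : ¬ c₀ φ.right < c₀ φ.left := fun h => ho ⟨hc₀𝒞, h⟩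
        have heq : c₀ φ.left = c₀ φ.right := le_antisymm (not_lt.mp hgt) (not_lt.mp hlt)
        have hsub' : SuppSet 𝒞 φ ∪ OppSet 𝒞 φ ⊆ (↑(R.erase c₀) : Set (A → ℚ≥0)) := by
          intro x hx
          have hxR : x ∈ R := hsub hx
          have hxne : x ≠ c₀ := by
            rintro rfl
            rcases hx with hx | hx
            · exact hs hx
            · exact ho hx
          simp only [Finset.coe_erase, Set.mem_diff, Set.mem_singleton_iff]
          exact ⟨hxR, hxne⟩
        obtain ⟨h1, h2⟩ := hgood' φ hφ hsub'
        constructor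
        · simp only [satLe]; exact Or.inr ⟨heq, h1⟩
        · intro hn; simp only [satLt]; exact Or.inr ⟨heq, h2 hn⟩

end Aux

/-- `Γ` is strongly `C(1)`-consistent iff `C^⊥ = ∅` and every strict statement of `Γ` is
supported by some evaluation in `𝒞`. -/
theorem stmt_12 {A : Type} [Fintype A] (𝒞 : Finset (A → ℚ≥0)) (Γ : Set (PrefStmt A)) :
    StrongCons (𝒞 : Set (A → ℚ≥0)) Γ ↔
      (MIBC 𝒞 Γ = ∅ ∧ ∀ φ ∈ Γ, φ.strict = true → ∃ c ∈ 𝒞, c φ.left < c φ.right) := by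
  constructor
  · rintro ⟨H, ⟨hnd, hiff⟩, hsat⟩
    constructor
    · -- MIBC = ∅
      ext c
      simp only [Set.mem_empty_iff_false, iff_false]
      rintro ⟨Γ', C', ⟨hΓ'Γ, hC'𝒞, hsupp, hopp⟩, hcC'⟩
      have hle : ∀ φ ∈ Γ', satLe H φ.left φ.right := by
        intro φ hφ
        have := hsat φ (hΓ'Γ hφ)
        unfold sat at this
        split at this
        · exact satLt_satLe this
        · exact this
      have := no_opp 𝒞 Γ' C' hsupp hopp H (fun x hx => (hiff x).mp hx) hle c hcC'
      exact this ((hiff c).mpr (hC'𝒞 hcC'))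
    · -- strict statements supported
      intro φ hφ hstrict
      have := hsat φ hφ
      unfold sat at this
      rw [hstrict] at this
      simp only [if_true] at this
      obtain ⟨c, hcH, hlt⟩ := satLt_exists this
      exact ⟨c, (hiff c).mp hcH, hlt⟩
  · rintro ⟨hM, hstrict⟩
    obtain ⟨L, hnd, hiff, hgood⟩ := build 𝒞 Γ hM 𝒞 (Finset.Subset.refl _)
    refine ⟨L, ⟨hnd, fun c => by simpa using hiff c⟩, ?_⟩
    intro φ hφ
    have hsub : SuppSet 𝒞 φ ∪ OppSet 𝒞 φ ⊆ (↑𝒞 : Set (A → ℚ≥0)) := by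
      rintro x (hx | hx) <;> exact hx.1
    obtain ⟨h1, h2⟩ := hgood φ hφ hsub
    unfold sat
    split
    · rename_i hst
      obtain ⟨c, hc𝒞, hlt⟩ := hstrict φ hφ (by simpa using hst)
      exact h2 ⟨c, hc𝒞, hlt⟩
    · exact h1
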